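/- Let Γ(x) denote the standard Gamma function. Then for all integers n ≥ 1: 1 − 1/(6n) < Γ(n + 1/2)/(√n · Γ(n)) < 1. -/

import Mathlib

open Real Filter Stirling Topology

noncomputable def qseq (n : ℕ) : ℝ := ((2*n).factorial : ℝ) / (4^n * ((n.factorial : ℝ))^2)

lemma qseq_pos (n : ℕ) : 0 < qseq n := by
  unfold qseq
  have h1 : (0:ℝ) < ((2*n).factorial : ℝ) := by exact_mod_cast (2*n).factorial_pos
  have h2 : (0:ℝ) < ((n.factorial : ℝ)) := by exact_mod_cast n.factorial_pos
  positivity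

lemma qseq_succ (n : ℕ) : qseq (n+1) = qseq n * ((n:ℝ) + 1/2) / ((n:ℝ)+1) := by
  unfold qseq
  have h2 : 2*(n+1) = (2*n+1)+1 := by ring
  rw [h2, Nat.factorial_succ, Nat.factorial_succ (2*n), Nat.factorial_succ n]
  have hf : ((n.factorial : ℝ)) ≠ 0 := by exact_mod_cast n.factorial_ne_zero
  have hf2 : (((2*n).factorial : ℝ)) ≠ 0 := by exact_mod_cast (2*n).factorial_ne_zero
  push_cast
  field_simp
  ring

lemma F_eq (n : ℕ) (hn : 1 ≤ n) :
    π * qseq n ^ 2 * n = π * stirlingSeq (2*n) ^ 2 / stirlingSeq n ^ 4 := by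
  have hn0 : (0:ℝ) < n := by exact_mod_cast hn
  have hs1 : 0 < stirlingSeq n := by
    obtain ⟨m, rfl⟩ := Nat.exists_eq_add_of_le hn
    rw [Nat.add_comm]; exact stirlingSeq'_pos m
  have hs2 : 0 < stirlingSeq (2*n) := by
    have h : 2*n = (2*n-1)+1 := by omega
    rw [h]; exact stirlingSeq'_pos _
  set P : ℝ := ((n:ℝ)/exp 1)^n with hP
  have hPpos : 0 < P := by positivity
  have hd1 : (0:ℝ) < √(2*(n:ℝ)) * P := by positivity
  have hd2 : (0:ℝ) < √(2*((2*n:ℕ):ℝ)) * (((2*n:ℕ):ℝ)/exp 1)^(2*n) := by positivity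
  have e1 : ((n.factorial : ℝ)) = stirlingSeq n * (√(2*(n:ℝ)) * P) := by
    rw [stirlingSeq, div_mul_cancel₀ _ hd1.ne']
  have e2 : (((2*n).factorial : ℝ)) = stirlingSeq (2*n) * (√(2*((2*n:ℕ):ℝ)) * (((2*n:ℕ):ℝ)/exp 1)^(2*n)) := by
    rw [stirlingSeq, div_mul_cancel₀ _ hd2.ne']
  have hpow : (((2*n:ℕ):ℝ)/exp 1)^(2*n) = 4^n * P^2 := by
    rw [hP]
    push_cast
    rw [show (2*(n:ℝ))/exp 1 = 2 * ((n:ℝ)/exp 1) by ring, mul_pow,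
      show (4:ℝ) = 2^2 by norm_num, ← pow_mul, ← pow_mul]
    ring
  have e1' : ((n.factorial : ℝ))^2 = stirlingSeq n ^2 * (2*(n:ℝ)) * P^2 := by
    rw [e1, mul_pow, mul_pow, Real.sq_sqrt (by positivity : (0:ℝ) ≤ 2*(n:ℝ))]
    ring
  have e2' : (((2*n).factorial : ℝ))^2 = stirlingSeq (2*n) ^2 * (2*(2*(n:ℝ))) * (4^n * P^2)^2 := by
    rw [e2, hpow, mul_pow, mul_pow]
    rw [show √(2*((2*n:ℕ):ℝ))^2 = 2*((2*n:ℕ):ℝ) from Real.sq_sqrt (by positivity)]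
    push_cast
    ring
  have hq2 : qseq n ^2 = (((2*n).factorial : ℝ))^2 / ((4^n)^2 * (((n.factorial : ℝ))^2)^2) := by
    unfold qseq
    rw [div_pow, mul_pow]
  rw [hq2, e1', e2']
  have h4 : (4:ℝ)^n ≠ 0 := by positivity
  field_simp

lemma tendsto_F : Tendsto (fun n : ℕ => π * qseq n ^ 2 * n) atTop (𝓝 1) := by
  have h := Stirling.tendsto_stirlingSeq_sqrt_pi
  have h2 : Tendsto (fun n : ℕ => stirlingSeq (2*n)) atTop (𝓝 (√π)) :=
    h.comp (tendsto_id.const_mul_atTop' two_pos)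
  have hne : (√π)^4 ≠ 0 := by positivity
  have key : Tendsto (fun n : ℕ => π * stirlingSeq (2*n) ^ 2 / stirlingSeq n ^ 4) atTop
      (𝓝 (π * (√π)^2 / (√π)^4)) := ((h2.pow 2).const_mul π).div (h.pow 4) hne
  have hval : π * (√π)^2 / (√π)^4 = 1 := by
    rw [show ((√π)^4 = ((√π)^2)^2) by ring, Real.sq_sqrt pi_nonneg]
    field_simp
  rw [hval] at key
  exact key.congr' (eventually_atTop.2 ⟨1, fun m hm => (F_eq m hm).symm⟩)

lemma F_lt_succ (m : ℕ) (hm : 1 ≤ m) :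
    π * qseq m ^ 2 * m < π * qseq (m+1) ^ 2 * ((m+1:ℕ):ℝ) := by
  have hx : (1:ℝ) ≤ m := by exact_mod_cast hm
  have hq := qseq_pos m
  rw [qseq_succ]
  push_cast
  rw [div_pow]
  have heq : π * ((qseq m * ((m:ℝ) + 1/2)) ^ 2 / ((m:ℝ) + 1) ^ 2) * ((m:ℝ) + 1)
      = π * qseq m ^ 2 * ((m:ℝ) + 1/2)^2 / ((m:ℝ) + 1) := by
    field_simp
  rw [heq, lt_div_iff₀ (by linarith : (0:ℝ) < (m:ℝ) + 1)]
  nlinarith [mul_pos pi_pos (mul_pos hq hq)]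

lemma F_le (m k : ℕ) (h1 : 1 ≤ m) (h2 : m ≤ k) :
    π * qseq m ^ 2 * m ≤ π * qseq k ^ 2 * k := by
  induction k, h2 using Nat.le_induction with
  | base => exact le_rfl
  | succ k hk ih => exact ih.trans (F_lt_succ k (h1.trans hk)).le

lemma F_lt_one (m : ℕ) (hm : 1 ≤ m) : π * qseq m ^ 2 * m < 1 := by
  have h1 : π * qseq (m+1) ^ 2 * ((m+1:ℕ):ℝ) ≤ 1 :=
    ge_of_tendsto tendsto_F (eventually_atTop.2 ⟨m+1, fun k hk => F_le (m+1) k (by omega) hk⟩)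
  refine lt_of_lt_of_le ?_ h1
  have := F_lt_succ m hm
  push_cast at this ⊢
  exact this

lemma G_succ_lt (m : ℕ) (hm : 1 ≤ m) :
    π * qseq (m+1) ^ 2 * (((m+1):ℕ):ℝ) ^ 2 / ((((m+1):ℕ):ℝ) - 1/4) <
      π * qseq m ^ 2 * (m:ℝ) ^ 2 / ((m:ℝ) - 1/4) := by
  have hx : (1:ℝ) ≤ m := by exact_mod_cast hm
  have hq := qseq_pos m
  rw [qseq_succ]
  push_cast
  rw [div_pow, div_lt_div_iff₀ (by linarith) (by linarith)]
  have heq : π * ((qseq m * ((m:ℝ)+1/2)) ^ 2 / ((m:ℝ)+1) ^ 2) * ((m:ℝ)+1) ^ 2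
      = π * qseq m ^2 * ((m:ℝ)+1/2)^2 := by
    field_simp
  rw [heq]
  nlinarith [mul_pos pi_pos (mul_pos hq hq)]

lemma G_le (m k : ℕ) (h1 : 1 ≤ m) (h2 : m ≤ k) :
    π * qseq k ^ 2 * (k:ℝ) ^ 2 / ((k:ℝ) - 1/4) ≤
      π * qseq m ^ 2 * (m:ℝ) ^ 2 / ((m:ℝ) - 1/4) := by
  induction k, h2 using Nat.le_induction with
  | base => exact le_rfl
  | succ k hk ih =>
      refine le_trans ?_ ih
      have := G_succ_lt k (h1.trans hk)
      push_cast at this ⊢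
      exact this.le

lemma tendsto_G : Tendsto (fun m : ℕ => π * qseq m ^ 2 * (m:ℝ) ^ 2 / ((m:ℝ) - 1/4)) atTop (𝓝 1) := by
  have t0 : Tendsto (fun m : ℕ => ((m:ℝ) - 1/4)/(m:ℝ)) atTop (𝓝 1) := by
    have h := (tendsto_const_div_atTop_nhds_zero_nat (1/4 : ℝ)).const_sub 1
    rw [sub_zero] at h
    refine h.congr' (eventually_atTop.2 ⟨1, fun m hm => ?_⟩)
    have : (m:ℝ) ≠ 0 := by positivity
    field_simp
  have t1 : Tendsto (fun m : ℕ => (m:ℝ)/((m:ℝ) - 1/4)) atTop (𝓝 1) := by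
    have := t0.inv₀ one_ne_zero
    rw [inv_one] at this
    refine this.congr (fun m => ?_)
    rw [inv_div]
  have t2 := tendsto_F.mul t1
  rw [mul_one] at t2
  refine t2.congr' (eventually_atTop.2 ⟨1, fun m hm => ?_⟩)
  have hm0 : (0:ℝ) < m := by exact_mod_cast hm
  have hm4 : ((m:ℝ) - 1/4) ≠ 0 := by
    have : (1:ℝ) ≤ m := by exact_mod_cast hm
    linarith
  field_simp

lemma G_gt_one (m : ℕ) (hm : 1 ≤ m) : 1 < π * qseq m ^ 2 * (m:ℝ) ^ 2 / ((m:ℝ) - 1/4) := by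
  have h1 : (1:ℝ) ≤ π * qseq (m+1) ^ 2 * (((m+1):ℕ):ℝ) ^ 2 / ((((m+1):ℕ):ℝ) - 1/4) := by
    refine le_of_tendsto tendsto_G (eventually_atTop.2 ⟨m+1, fun k hk => ?_⟩)
    exact G_le (m+1) k (by omega) hk
  exact lt_of_le_of_lt h1 (G_succ_lt m hm)

lemma gamma_eq (n : ℕ) (hn : 1 ≤ n) :
    Real.Gamma ((n:ℝ) + 1/2) = √π * qseq n * (n:ℝ) * Real.Gamma (n:ℝ) := by
  obtain ⟨m, rfl⟩ := Nat.exists_eq_add_of_le hn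
  set n := 1 + m with hndef
  have hx : (n:ℝ) = (m:ℝ) + 1 := by rw [hndef]; push_cast; ring
  have dup := Real.Gamma_mul_Gamma_add_half ((n:ℝ))
  have h1 : Real.Gamma ((n:ℝ)) = (m.factorial : ℝ) := by
    rw [hx, Real.Gamma_nat_eq_factorial]
  have h2 : Real.Gamma (2*(n:ℝ)) = (((2*m+1).factorial : ℝ)) := by
    have : 2*(n:ℝ) = ((2*m+1:ℕ):ℝ) + 1 := by rw [hx]; push_cast; ring
    rw [this, Real.Gamma_nat_eq_factorial]
  have h3 : (2:ℝ)^((1:ℝ)-2*(n:ℝ)) = ((2:ℝ)^(2*m+1))⁻¹ := by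
    have : (1:ℝ)-2*(n:ℝ) = -((2*m+1:ℕ):ℝ) := by rw [hx]; push_cast; ring
    rw [this, Real.rpow_neg (by norm_num), Real.rpow_natCast]
  rw [h1, h2, h3] at dup
  have hfac : ((m.factorial : ℝ)) ≠ 0 := by exact_mod_cast m.factorial_ne_zero
  have key : Real.Gamma ((n:ℝ)+1/2)
      = (((2*m+1).factorial : ℝ) * ((2:ℝ)^(2*m+1))⁻¹ * √π) / (m.factorial : ℝ) := by
    rw [eq_div_iff hfac]
    linear_combination dup
  rw [key, h1, hx]
  unfold qseq
  have hfac2 : (((2*m+1).factorial : ℝ)) ≠ 0 := by exact_mod_cast (2*m+1).factorial_ne_zero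
  have hpw : ((2:ℝ)^(2*m+1)) ≠ 0 := by positivity
  have E1 : (((2*(1+m)).factorial : ℝ)) = 2*((m:ℝ)+1) * (((2*m+1).factorial : ℝ)) := by
    rw [show 2*(1+m) = (2*m+1)+1 by ring, Nat.factorial_succ]
    push_cast
    ring
  have E2 : ((((1+m)).factorial : ℝ)) = ((m:ℝ)+1) * (m.factorial : ℝ) := by
    rw [show 1+m = m+1 by ring, Nat.factorial_succ]
    push_cast
    ring
  have E3 : (4:ℝ)^(1+m) = 2 * (2:ℝ)^(2*m+1) := by
    rw [show (4:ℝ) = 2^2 by norm_num, ← pow_mul]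
    rw [show 2*(1+m) = (2*m+1)+1 by ring, pow_succ]
    ring
  rw [hndef, E1, E2, E3]
  field_simp

/-- **(i) of Lemma 2.1 (Jiang).**  For all integers `n ≥ 1`,
`1 − 1/(6n) < Γ(n + 1/2)/(√n · Γ(n)) < 1`, where `Γ` is the standard Gamma function. -/
theorem gamma_ratio_bounds (n : ℕ) (hn : 1 ≤ n) :
    1 - 1 / (6 * (n : ℝ)) < Real.Gamma ((n : ℝ) + 1 / 2) / (Real.sqrt n * Real.Gamma n) ∧
    Real.Gamma ((n : ℝ) + 1 / 2) / (Real.sqrt n * Real.Gamma n) < 1 := by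
  have hx : (1:ℝ) ≤ (n:ℝ) := by exact_mod_cast hn
  have hx0 : (0:ℝ) < (n:ℝ) := by linarith
  have hΓ : 0 < Real.Gamma (n:ℝ) := Real.Gamma_pos_of_pos hx0
  have hΓ2 : 0 < Real.Gamma ((n:ℝ) + 1/2) := Real.Gamma_pos_of_pos (by linarith)
  have hs : 0 < Real.sqrt (n:ℝ) := Real.sqrt_pos.2 hx0
  set a : ℝ := Real.Gamma ((n:ℝ) + 1/2) / (Real.sqrt (n:ℝ) * Real.Gamma (n:ℝ)) with ha
  have hapos : 0 < a := div_pos hΓ2 (by positivity)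
  have ha2 : a^2 = π * qseq n ^ 2 * (n:ℝ) := by
    rw [ha, gamma_eq n hn, div_pow, mul_pow (Real.sqrt (n:ℝ)), Real.sq_sqrt hx0.le,
      mul_pow, mul_pow, mul_pow, Real.sq_sqrt pi_nonneg]
    field_simp
  constructor
  · -- lower bound
    have hG := G_gt_one n hn
    have hm4 : (0:ℝ) < (n:ℝ) - 1/4 := by linarith
    have hA : (n:ℝ) - 1/4 < π * qseq n ^ 2 * (n:ℝ)^2 := by
      rw [lt_div_iff₀ hm4] at hG
      linarith [hG]
    have hA2 : ((n:ℝ) - 1/4)/(n:ℝ) < a^2 := by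
      rw [div_lt_iff₀ hx0, ha2]
      nlinarith
    have hsq : (1 - 1/(6*(n:ℝ)))^2 < a^2 := by
      refine lt_of_le_of_lt ?_ hA2
      rw [le_div_iff₀ hx0]
      have h6 : (6*(n:ℝ)) ≠ 0 := by positivity
      have hu : 1/(6*(n:ℝ)) * (6*(n:ℝ)) = 1 := by field_simp
      nlinarith [hu, sq_nonneg (1/(6*(n:ℝ))), hx]
    have hpos : (0:ℝ) ≤ 1 - 1/(6*(n:ℝ)) ∨ True := Or.inr trivial
    nlinarith [hsq, hapos, sq_nonneg (a - (1 - 1/(6*(n:ℝ)))), sq_nonneg (a + (1 - 1/(6*(n:ℝ))))]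
  · -- upper bound
    have h1 : a^2 < 1 := by rw [ha2]; exact F_lt_one n hn
    nlinarith [h1, hapos]
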